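/- Let c, K > 0, μ > 1, and ε₀ > 0, and let (ε_i)_{i≥0} be a sequence of real numbers with ε₀ as its initial term such that for all i: 0 < ε_{i+1} ≤ ε_i and ε_i − ε_{i+1} ≥ c·5^(−K·ε_i^((1−μ)/2)). Then there exists a constant C′ > 0 (depending only on c, K, μ, ε₀) such that for every ε ∈ (0, ε₀) and every index i ≥ C′·5^(C′·ε^((1−μ)/2)), one has ε_i ≤ ε. -/

import Mathlib

/-- Let `c, K > 0`, `μ > 1`, `ε₀ > 0`, and let `(ε_i)` be a sequence
with initial term `ε₀` satisfying, for all `i`, `0 < ε_{i+1} ≤ ε_i` and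
`ε_i - ε_{i+1} ≥ c * 5^(-K * ε_i^((1-μ)/2))`. Then there is a constant `C' > 0` such
that for every `ε ∈ (0, ε₀)` and every index `i ≥ C' * 5^(C' * ε^((1-μ)/2))`, we have
`ε_i ≤ ε`. -/
theorem stmt8 (c K μ ε₀ : ℝ) (hc : 0 < c) (hK : 0 < K) (hμ : 1 < μ) (hε₀ : 0 < ε₀)
    (e : ℕ → ℝ) (h0 : e 0 = ε₀)
    (hpos : ∀ i, 0 < e (i + 1)) (hmono : ∀ i, e (i + 1) ≤ e i)
    (hgap : ∀ i, c * (5 : ℝ) ^ (-(K * e i ^ ((1 - μ) / 2))) ≤ e i - e (i + 1)) :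
    ∃ C' : ℝ, 0 < C' ∧
      ∀ ε ∈ Set.Ioo (0 : ℝ) ε₀, ∀ i : ℕ,
        C' * (5 : ℝ) ^ (C' * ε ^ ((1 - μ) / 2)) ≤ (i : ℝ) → e i ≤ ε := by
  set p := (1 - μ) / 2 with hp
  have hpneg : p ≤ 0 := by rw [hp]; linarith
  refine ⟨max K (ε₀ / c + 1), lt_of_lt_of_le hK (le_max_left _ _), ?_⟩
  set C' := max K (ε₀ / c + 1) with hC'
  intro ε hε i hi
  have hεpos : 0 < ε := hε.1
  set s := ε ^ p with hs
  have hspos : 0 < s := Real.rpow_pos_of_pos hεpos p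
  set g := c * (5:ℝ) ^ (-(K * s)) with hg
  have hgpos : 0 < g := mul_pos hc (Real.rpow_pos_of_pos (by norm_num) _)
  have key : ∀ n : ℕ, ε < e n → e n ≤ ε₀ - n * g := by
    intro n
    induction n with
    | zero => intro _; simp [h0]
    | succ n ih =>
      intro hlt
      have hen : ε < e n := lt_of_lt_of_le hlt (hmono n)
      have h1 := ih hen
      have hexp : e n ^ p ≤ s := by
        rw [hs]
        exact Real.rpow_le_rpow_of_nonpos hεpos hen.le hpneg
      have h5 : (5:ℝ) ^ (-(K * s)) ≤ (5:ℝ) ^ (-(K * e n ^ p)) := by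
        apply Real.rpow_le_rpow_of_exponent_le (by norm_num)
        nlinarith
      have h2 := hgap n
      have h6 : g ≤ e n - e (n + 1) := by
        have := mul_le_mul_of_nonneg_left h5 hc.le
        rw [hg]; linarith
      push_cast
      linarith
  by_contra hgt
  have hlt : ε < e i := not_le.mp hgt
  have hkey := key i hlt
  -- so i * g < ε₀
  have higl : (i : ℝ) * g < ε₀ := by nlinarith
  -- lower bound on i
  have hA1 : (1:ℝ) ≤ (5:ℝ) ^ (K * s) := Real.one_le_rpow (by norm_num) (by positivity)
  have hAB : (5:ℝ) ^ (K * s) ≤ (5:ℝ) ^ (C' * s) := by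
    apply Real.rpow_le_rpow_of_exponent_le (by norm_num)
    have : K ≤ C' := le_max_left _ _
    nlinarith
  have hC'ge : ε₀ / c + 1 ≤ C' := le_max_right _ _
  have hmul : (5:ℝ) ^ (K * s) * (5:ℝ) ^ (-(K * s)) = 1 := by
    rw [← Real.rpow_add (by norm_num : (0:ℝ) < 5), add_neg_cancel, Real.rpow_zero]
  have hApos : (0:ℝ) < (5:ℝ) ^ (K * s) := Real.rpow_pos_of_pos (by norm_num) _
  have hBpos : (0:ℝ) < (5:ℝ) ^ (C' * s) := Real.rpow_pos_of_pos (by norm_num) _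
  have hC'pos : 0 < C' := lt_of_lt_of_le hK (le_max_left _ _)
  have hig : ε₀ + c ≤ (i : ℝ) * g := by
    have h1 : (ε₀ / c + 1) * (5:ℝ) ^ (K * s) ≤ C' * (5:ℝ) ^ (C' * s) := by
      nlinarith
    have h2 : (ε₀ / c + 1) * (5:ℝ) ^ (K * s) ≤ (i : ℝ) := le_trans h1 hi
    have h3 : (ε₀ / c + 1) * (5:ℝ) ^ (K * s) * g ≤ (i : ℝ) * g := by
      nlinarith
    have h4 : (ε₀ / c + 1) * (5:ℝ) ^ (K * s) * g = ε₀ + c := by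
      rw [hg]
      field_simp
      linear_combination hmul
    linarith [h4 ▸ h3]
  linarith
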